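/- Let $F$ be a real quadratic field with discriminant $d(F)$, and assume Ennola's bound: the euclidean minimum $M(F) = \inf\{\mu \in \mathbb{R} : \forall x \in F\ \exists y \in \mathcal{O}_F,\ |\mathrm{Nm}(x-y)| \le \mu\}$ satisfies $M(F) \ge \sqrt{d(F)}/(16+6\sqrt{6})$. Let $n$ be a positive integer and $t = \mathrm{lcm}(1,2,\dots,n)$. If $d(F) > (16+6\sqrt{6})^2 \cdot t^4$, then there exists $z \in F$ such that $|\mathrm{Nm}(z - q)| > 1$ for every $q \in \mathcal{CF}_2(n)$. -/

import Mathlib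

lemma matrix_ch2 (M : Matrix (Fin 2) (Fin 2) ℚ) :
    M * (Matrix.trace M • 1 - M) = M.det • 1 := by
  ext i j
  fin_cases i <;> fin_cases j <;>
    simp [Matrix.mul_apply, Fin.sum_univ_two, Matrix.trace_fin_two, Matrix.det_fin_two,
      Matrix.one_apply] <;> ring

lemma quad_id (F : Type*) [Field F] [NumberField F] (hdeg : Module.finrank ℚ F = 2) (x : F) :
    x * (algebraMap ℚ F (Algebra.trace ℚ F x) - x) = algebraMap ℚ F (Algebra.norm ℚ x) := by
  let b : Module.Basis (Fin 2) ℚ F := Module.finBasisOfFinrankEq ℚ F hdeg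
  apply Algebra.leftMulMatrix_injective b
  rw [map_mul, map_sub, AlgHom.commutes, AlgHom.commutes,
    Algebra.trace_eq_matrix_trace b, Algebra.norm_eq_matrix_det b]
  have := matrix_ch2 (Algebra.leftMulMatrix b x)
  simpa [Algebra.algebraMap_eq_smul_one] using this

theorem stmt_12 (F : Type*) [Field F] [NumberField F]
    (hdeg : Module.finrank ℚ F = 2) (v1 v2 : F →+* ℝ) (hv : v1 ≠ v2)
    (hEnnola : Real.sqrt (NumberField.discr F) / (16 + 6 * Real.sqrt 6) ≤
      sInf {μ : ℝ | ∀ x : F, ∃ y : NumberField.RingOfIntegers F,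
        ((|Algebra.norm ℚ (x - (y : F))| : ℚ) : ℝ) ≤ μ})
    (n : ℕ) (hn : 0 < n) (t : ℕ) (ht : t = (Finset.Icc 1 n).lcm id)
    (hd : ((16 + 6 * Real.sqrt 6) ^ 2 * (t : ℝ) ^ 4) < (NumberField.discr F : ℝ)) :
    ∃ z : F, ∀ q1 q2 : NumberField.RingOfIntegers F, q2 ≠ 0 →
      |Algebra.norm ℚ (q2 : F)| ≤ (n : ℚ) →
      1 < |Algebra.norm ℚ (z - ((q1 : F) + 1 / (q2 : F)))| := by
  have h6 : (0:ℝ) < 16 + 6 * Real.sqrt 6 := by positivity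
  set S : Set ℝ := {μ : ℝ | ∀ x : F, ∃ y : NumberField.RingOfIntegers F,
        ((|Algebra.norm ℚ (x - (y : F))| : ℚ) : ℝ) ≤ μ} with hS
  -- t ≠ 0
  have ht0 : t ≠ 0 := by
    rw [ht]
    intro h
    rw [Finset.lcm_eq_zero_iff] at h
    obtain ⟨a, ha, ha0⟩ := h
    simp only [id] at ha0
    rw [ha0] at ha
    simp at ha
  -- step 1 : (t:ℝ)^2 < sInf S
  have h1 : ((t : ℝ)) ^ 2 < sInf S := by
    refine lt_of_lt_of_le ?_ hEnnola
    rw [lt_div_iff₀ h6]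
    have e : (t:ℝ)^2 * (16 + 6 * Real.sqrt 6)
        = Real.sqrt ((16 + 6 * Real.sqrt 6) ^ 2 * (t : ℝ) ^ 4) := by
      rw [show ((16 + 6 * Real.sqrt 6) ^ 2 * (t : ℝ) ^ 4)
          = ((t:ℝ)^2 * (16 + 6 * Real.sqrt 6))^2 by ring, Real.sqrt_sq (by positivity)]
    rw [e]
    exact Real.sqrt_lt_sqrt (by positivity) hd
  -- step 2 : (t:ℝ)^2 ∉ S
  have hbdd : BddBelow S := by
    refine ⟨0, fun μ hμ => ?_⟩
    obtain ⟨y, hy⟩ := hμ 0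
    exact le_trans (by positivity) hy
  have h2 : ((t : ℝ)) ^ 2 ∉ S := fun hmem => absurd (csInf_le hbdd hmem) (not_le.mpr h1)
  rw [hS, Set.mem_setOf_eq] at h2
  push_neg at h2
  obtain ⟨x, hx⟩ := h2
  refine ⟨x / (t : F), fun q1 q2 hq2 hle => ?_⟩
  have htF : (t : F) ≠ 0 := Nat.cast_ne_zero.mpr ht0
  have hq2F : (q2 : F) ≠ 0 := NumberField.RingOfIntegers.coe_ne_zero_iff.mpr hq2
  -- norm of q2 as an integer
  set N : ℤ := Algebra.norm ℤ q2 with hN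
  have hNcast : ((N : ℚ)) = Algebra.norm ℚ (q2 : F) := Algebra.coe_norm_int q2
  have hN0 : N ≠ 0 := by
    intro h
    apply hq2F
    have : Algebra.norm ℚ (q2 : F) = 0 := by rw [← hNcast, h]; simp
    exact (Algebra.norm_eq_zero_iff).mp this
  -- N divides t
  have hdvdt : N ∣ (t : ℤ) := by
    have habsQ : |(N : ℚ)| ≤ (n : ℚ) := by rw [hNcast]; exact hle
    have habsZ : |N| ≤ (n : ℤ) := by exact_mod_cast (by rwa [← Int.cast_abs] at habsQ :
      ((|N| : ℤ) : ℚ) ≤ (n : ℚ))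
    have hNn : N.natAbs ≤ n := by
      rw [Int.abs_eq_natAbs] at habsZ; exact_mod_cast habsZ
    have hmem : N.natAbs ∈ Finset.Icc 1 n := Finset.mem_Icc.mpr ⟨Int.natAbs_pos.mpr hN0, hNn⟩
    have hdl : N.natAbs ∣ t := ht ▸ Finset.dvd_lcm (f := id) hmem
    exact Int.natAbs_dvd.mp (Int.natCast_dvd_natCast.mpr hdl)
  obtain ⟨c, hc⟩ := hdvdt
  -- the conjugate w0 of q2
  set T : ℤ := Algebra.trace ℤ (NumberField.RingOfIntegers F) q2 with hT
  have hTcast : ((T : ℚ)) = Algebra.trace ℚ F (q2 : F) := Algebra.coe_trace_int q2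
  set w0 : NumberField.RingOfIntegers F := (T : NumberField.RingOfIntegers F) - q2 with hw0
  have hkey : (q2 : F) * (w0 : F) = algebraMap ℚ F (N : ℚ) := by
    have hq := quad_id F hdeg (q2 : F)
    rw [← hTcast, ← hNcast] at hq
    rw [← hq]
    congr 1
    rw [hw0, NumberField.RingOfIntegers.coe_eq_algebraMap, map_sub, map_intCast]
    simp [NumberField.RingOfIntegers.coe_eq_algebraMap]
  set w : NumberField.RingOfIntegers F := w0 * (c : NumberField.RingOfIntegers F) with hwdef
  have hwF : (w : F) = (w0 : F) * ((c : ℤ) : F) := by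
    rw [hwdef, NumberField.RingOfIntegers.coe_eq_algebraMap, map_mul, map_intCast]
  have hq2w : (t : F) = (q2 : F) * (w : F) := by
    rw [hwF, ← mul_assoc, hkey]
    have h1 : ((t : ℕ) : F) = ((N * c : ℤ) : F) := by exact_mod_cast congrArg ((Int.cast : ℤ → F)) hc
    rw [h1]
    push_cast
    rw [show (algebraMap ℚ F) ((N : ℤ) : ℚ) = ((N : ℤ) : F) by
      rw [map_intCast]]
  -- assemble
  set y : NumberField.RingOfIntegers F := (t : NumberField.RingOfIntegers F) * q1 + w with hy
  have hyF : (y : F) = (t : F) * (q1 : F) + (w : F) := by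
    rw [hy, NumberField.RingOfIntegers.coe_eq_algebraMap, map_add, map_mul, map_natCast]
  have hzq : x / (t : F) - ((q1 : F) + 1 / (q2 : F)) = (x - (y : F)) / (t : F) := by
    rw [hyF]
    have hw0' : (w : F) ≠ 0 := by
      intro h
      apply htF
      rw [hq2w, h, mul_zero]
    field_simp
    rw [hq2w]
    ring
  rw [hzq]
  have hnormt : Algebra.norm ℚ ((t : F)) = (t : ℚ) ^ 2 := by
    rw [show ((t : F)) = algebraMap ℚ F (t : ℚ) by simp, Algebra.norm_algebraMap, hdeg]
  have hdivnorm : Algebra.norm ℚ ((x - (y : F)) / (t : F)) =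
      Algebra.norm ℚ (x - (y : F)) / (t : ℚ) ^ 2 := by
    rw [eq_div_iff (by positivity : ((t:ℚ))^2 ≠ 0), ← hnormt, ← map_mul,
      div_mul_cancel₀ _ htF]
  rw [hdivnorm, abs_div]
  have hxy : ((t : ℚ)) ^ 2 < |Algebra.norm ℚ (x - (y : F))| := by
    exact_mod_cast hx y
  rw [abs_of_pos (by positivity : (0:ℚ) < ((t:ℚ))^2)]
  rw [one_lt_div (by positivity : (0:ℚ) < ((t:ℚ))^2)]
  exact hxy
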